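/- Let G be an outerplanar graph (a graph with no K₄ minor and no K_{2,3} minor) whose outer face is a cycle C containing all vertices, and let d_C denote the path metric along the cycle C. Let p be a vertex of C and let (u,v) be an edge of the cycle with d_C(p,u) < d_C(p,v). Then at least one of the following holds: (a) every neighbor w of v in G satisfies d_C(p,w) ≥ d_C(p,u); (b) every neighbor w of u in G satisfies d_C(p,w) ≤ d_C(p,v). Equivalently: if there exist a neighbor v' of v with d_C(p,v') < d_C(p,u) and a neighbor u' of u with d_C(p,u') > d_C(p,v), then the union of the cycle C with the chords (u,u') and (v,v') contains a K₄ minor. -/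

import Mathlib

/-- `G` has a complete graph `K_n` as a minor: there are `n` nonempty, pairwise
disjoint, connected branch sets with an edge of `G` between any two of them. -/
def HasCompleteMinor {V : Type*} (G : SimpleGraph V) (n : ℕ) : Prop :=
  ∃ A : Fin n → Set V,
    (∀ i, (A i).Nonempty) ∧
    (∀ i, (SimpleGraph.induce (A i) G).Connected) ∧
    (∀ i j, i ≠ j → Disjoint (A i) (A j)) ∧
    (∀ i j, i ≠ j → ∃ a ∈ A i, ∃ b ∈ A j, G.Adj a b)

/-- `G` has `K_{2,3}` as a minor. -/
def HasK23Minor {V : Type*} (G : SimpleGraph V) : Prop :=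
  ∃ (A : Fin 2 → Set V) (B : Fin 3 → Set V),
    (∀ i, (A i).Nonempty) ∧ (∀ j, (B j).Nonempty) ∧
    (∀ i, (SimpleGraph.induce (A i) G).Connected) ∧
    (∀ j, (SimpleGraph.induce (B j) G).Connected) ∧
    (∀ i j, i ≠ j → Disjoint (A i) (A j)) ∧
    (∀ i j, i ≠ j → Disjoint (B i) (B j)) ∧
    (∀ i j, Disjoint (A i) (B j)) ∧
    (∀ i j, ∃ a ∈ A i, ∃ b ∈ B j, G.Adj a b)

/-- The path metric (with unit edge lengths) along the cycle `0, 1, …, n−1, 0`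
on `Fin n`. -/
def cycGraphDist (n : ℕ) (i j : Fin n) : ℕ :=
  min ((j.val + n - i.val) % n) ((i.val + n - j.val) % n)

open Fin.CommRing

private lemma fin_sub_val {n : ℕ} [NeZero n] (a b : Fin n) :
    (a - b).val = (a.val + (n - b.val)) % n := by
  rw [Fin.sub_def]; simp [Nat.add_comm]

private lemma cyc_dist_eq {n : ℕ} [NeZero n] (p x : Fin n) :
    cycGraphDist n p x = min ((x - p).val) (n - (x - p).val) := by
  have hn0 : 0 < n := Nat.pos_of_ne_zero (NeZero.ne n)
  have hp := p.isLt; have hx := x.isLt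
  rw [cycGraphDist, fin_sub_val]
  have hpn : x.val + (n - p.val) = x.val + n - p.val := by omega
  rw [hpn]
  rcases lt_trichotomy p.val x.val with h | h | h
  · have h1 : (x.val + n - p.val) % n = x.val - p.val := by
      rw [show x.val + n - p.val = (x.val - p.val) + n from by omega, Nat.add_mod_right,
        Nat.mod_eq_of_lt (by omega)]
    have h2 : (p.val + n - x.val) % n = p.val + n - x.val := Nat.mod_eq_of_lt (by omega)
    rw [h1, h2]; omega
  · have h1 : (x.val + n - p.val) % n = 0 := by
      rw [show x.val + n - p.val = n from by omega, Nat.mod_self]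
    have h2 : (p.val + n - x.val) % n = 0 := by
      rw [show p.val + n - x.val = n from by omega, Nat.mod_self]
    rw [h1, h2]; omega
  · have h1 : (x.val + n - p.val) % n = x.val + n - p.val := Nat.mod_eq_of_lt (by omega)
    have h2 : (p.val + n - x.val) % n = p.val - x.val := by
      rw [show p.val + n - x.val = (p.val - x.val) + n from by omega, Nat.add_mod_right,
        Nat.mod_eq_of_lt (by omega)]
    rw [h1, h2]; omega

private lemma arc_mem {n : ℕ} [NeZero n] (b : Fin n) (m : ℕ) (hm : m < n) :
    ((b + (m : Fin n)) - b).val = m := by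
  have h : (b + (m : Fin n)) - b = (m : Fin n) := by ring
  rw [h, Fin.val_natCast, Nat.mod_eq_of_lt hm]

private lemma arc_conn {n : ℕ} [NeZero n] (G : SimpleGraph (Fin n))
    (hcyc : ∀ i : Fin n, G.Adj i (i + 1)) (b : Fin n) (l r : ℕ) (hlr : l ≤ r) (hr : r < n) :
    (SimpleGraph.induce {x : Fin n | l ≤ (x - b).val ∧ (x - b).val ≤ r} G).Connected := by
  set S : Set (Fin n) := {x : Fin n | l ≤ (x - b).val ∧ (x - b).val ≤ r} with hS
  have hmem : ∀ m : ℕ, l ≤ m → m ≤ r → b + (m : Fin n) ∈ S := by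
    intro m h1 h2
    constructor <;> rw [arc_mem b m (by omega)] <;> omega
  have hreach : ∀ m : ℕ, (hlm : l ≤ m) → (hmr : m ≤ r) →
      (SimpleGraph.induce S G).Reachable ⟨b + (l : Fin n), hmem l le_rfl hlr⟩
        ⟨b + (m : Fin n), hmem m hlm hmr⟩ := by
    intro m hlm
    induction m, hlm using Nat.le_induction with
    | base => intro _; exact SimpleGraph.Reachable.refl _
    | succ m hm ih =>
      intro hmr
      refine (ih (by omega)).trans (SimpleGraph.Adj.reachable ?_)
      have hadj : G.Adj (b + (m : Fin n)) (b + ((m + 1 : ℕ) : Fin n)) := by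
        have h2 : b + ((m + 1 : ℕ) : Fin n) = (b + (m : Fin n)) + 1 := by push_cast; ring
        rw [h2]; exact hcyc _
      exact hadj
  rw [SimpleGraph.connected_iff]
  refine ⟨?_, ⟨⟨b + (l : Fin n), hmem l le_rfl hlr⟩⟩⟩
  rintro ⟨x, hx⟩ ⟨y, hy⟩
  have hx' : ∀ z : Fin n, b + (((z - b).val : ℕ) : Fin n) = z := by
    intro z; rw [Fin.cast_val_eq_self]; ring
  have ex : (⟨x, hx⟩ : S) = ⟨b + (((x - b).val : ℕ) : Fin n), hmem _ hx.1 hx.2⟩ :=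
    Subtype.ext (hx' x).symm
  have ey : (⟨y, hy⟩ : S) = ⟨b + (((y - b).val : ℕ) : Fin n), hmem _ hy.1 hy.2⟩ :=
    Subtype.ext (hx' y).symm
  rw [ex, ey]
  exact (hreach _ hx.1 hx.2).symm.trans (hreach _ hy.1 hy.2)

/-- Lemma 3.8: Let `G` be an outerplanar graph (no `K₄` and no `K_{2,3}` minor) on
vertex set `Fin n`, containing the Hamilton cycle `i ∼ i+1` as its outer face, with
`d_C` the path metric along the cycle. If `(u,v)` is a cycle edge and `p` a vertex
with `d_C(p,u) < d_C(p,v)`, then either every neighbor `w` of `v` has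
`d_C(p,w) ≥ d_C(p,u)`, or every neighbor `w` of `u` has `d_C(p,w) ≤ d_C(p,v)`. -/
theorem outerplanar_good_endpoint {n : ℕ} (hn : 3 ≤ n) [NeZero n] (G : SimpleGraph (Fin n))
    (hcyc : ∀ i : Fin n, G.Adj i (i + 1))
    (hK4 : ¬ HasCompleteMinor G 4) (hK23 : ¬ HasK23Minor G)
    (p u v : Fin n) (huv : v = u + 1)
    (hpuv : cycGraphDist n p u < cycGraphDist n p v) :
    (∀ w : Fin n, G.Adj v w → cycGraphDist n p u ≤ cycGraphDist n p w) ∨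
    (∀ w : Fin n, G.Adj u w → cycGraphDist n p w ≤ cycGraphDist n p v) := by
  by_contra hcon
  push_neg at hcon
  obtain ⟨⟨v', hvv', hv'⟩, ⟨u', huu', hu'⟩⟩ := hcon
  apply hK4
  -- arithmetic setup
  have h1n : ((1 : Fin n)).val = 1 := by
    have h := Fin.val_natCast 1 n
    rw [Nat.cast_one] at h
    rw [h, Nat.mod_eq_of_lt (by omega)]
  have h2n : ((2 : Fin n)).val = 2 := by
    have h := Fin.val_natCast 2 n
    rw [Nat.cast_ofNat] at h
    rw [h, Nat.mod_eq_of_lt (by omega)]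
  rw [cyc_dist_eq, cyc_dist_eq] at hpuv
  rw [cyc_dist_eq, cyc_dist_eq] at hv'
  rw [cyc_dist_eq, cyc_dist_eq] at hu'
  set A := (u - p).val with hA
  have hAn : A < n := (u - p).isLt
  have hBv : (v - p).val = (A + 1) % n := by
    rw [show v - p = (u - p) + 1 from by rw [huv]; ring, Fin.val_add, h1n, hA]
  -- v ≠ p, so (v-p).val = A+1 and the key inequalities
  have hAn1 : A + 1 < n := by
    by_contra h
    have h' : A + 1 = n := by omega
    rw [hBv, h', Nat.mod_self] at hpuv
    omega
  have hBv' : (v - p).val = A + 1 := by rw [hBv, Nat.mod_eq_of_lt hAn1]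
  rw [hBv'] at hpuv hu'
  have h2A : 2 * A + 2 ≤ n := by omega
  set a1 := (u' - p).val with ha1
  have ha1n : a1 < n := (u' - p).isLt
  set a2 := (v' - p).val with ha2
  have ha2n : a2 < n := (v' - p).isLt
  have hu'b : A + 2 ≤ a1 ∧ a1 ≤ n - A - 2 := by omega
  have hA1 : 1 ≤ A := by omega
  have h2A4 : 2 * A + 4 ≤ n := by omega
  have hsplit : a2 < A ∨ n - A < a2 := by omega
  -- coordinates relative to b = v + 1
  set b : Fin n := v + 1 with hb
  have hT : ∀ x : Fin n, (x - b).val = ((x - p).val + (n - (A + 2))) % n := by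
    intro x
    have hx : x - b = (x - p) - ((u - p) + 2) := by rw [hb, huv]; ring
    have hc : ((u - p) + 2).val = A + 2 := by
      rw [Fin.val_add, h2n, ← hA, Nat.mod_eq_of_lt (by omega)]
    rw [hx, fin_sub_val, hc]
  have hTval : ∀ x : Fin n, A + 2 ≤ (x - p).val → (x - b).val = (x - p).val - (A + 2) := by
    intro x hx
    have hxn := (x - p).isLt
    rw [hT, show (x - p).val + (n - (A + 2)) = ((x - p).val - (A + 2)) + n from by omega,
      Nat.add_mod_right, Nat.mod_eq_of_lt (by omega)]
  have hTval2 : ∀ x : Fin n, (x - p).val < A + 2 → (x - b).val = (x - p).val + n - (A + 2) := by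
    intro x hx
    rw [hT, Nat.mod_eq_of_lt (by omega)]
    omega
  -- T-values of the relevant vertices
  have Tu : (u - b).val = n - 2 := by rw [hTval2 u (by omega)]; omega
  have Tv : (v - b).val = n - 1 := by rw [hTval2 v (by omega)]; omega
  have Tv1 : ((v + 1) - b).val = 0 := by rw [hb, sub_self, Fin.val_zero]
  have hau1 : ((u - 1) - p).val = A - 1 := by
    rw [show u - 1 - p = (u - p) - 1 from by ring, fin_sub_val, h1n, ← hA,
      show A + (n - 1) = (A - 1) + n from by omega, Nat.add_mod_right,
      Nat.mod_eq_of_lt (by omega)]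
  have Tu1 : ((u - 1) - b).val = n - 3 := by
    rw [hTval2 (u - 1) (by rw [hau1]; omega), hau1]; omega
  set L := a1 - (A + 2) with hL
  have hLb : L ≤ n - 2 * A - 4 := by omega
  have Tu' : (u' - b).val = L := by rw [hTval u' (by omega)]
  have hau'1 : ((u' + 1) - p).val = a1 + 1 := by
    rw [show u' + 1 - p = (u' - p) + 1 from by ring, Fin.val_add, h1n, ← ha1,
      Nat.mod_eq_of_lt (by omega)]
  have Tu'1 : ((u' + 1) - b).val = L + 1 := by
    rw [hTval (u' + 1) (by rw [hau'1]; omega), hau'1]; omega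
  have Tv' : L < (v' - b).val ∧ (v' - b).val ≤ n - 3 := by
    rcases hsplit with h | h
    · rw [hTval2 v' (by omega)]; omega
    · rw [hTval v' (by omega)]; omega
  -- the four branch sets
  refine ⟨![{x | n - 2 ≤ (x - b).val ∧ (x - b).val ≤ n - 2},
            {x | n - 1 ≤ (x - b).val ∧ (x - b).val ≤ n - 1},
            {x | 0 ≤ (x - b).val ∧ (x - b).val ≤ L},
            {x | L + 1 ≤ (x - b).val ∧ (x - b).val ≤ n - 3}], ?_, ?_, ?_, ?_⟩
  · intro i
    fin_cases i
    · exact ⟨u, by exact ⟨by omega, by omega⟩⟩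
    · exact ⟨v, by exact ⟨by omega, by omega⟩⟩
    · exact ⟨u', by exact ⟨by omega, by omega⟩⟩
    · exact ⟨v', by exact ⟨by omega, by omega⟩⟩
  · intro i
    fin_cases i <;>
      exact arc_conn G hcyc b _ _ (by omega) (by omega)
  · intro i j hij
    fin_cases i <;> fin_cases j <;>
      first
        | exact absurd rfl hij
        | · rw [Set.disjoint_left]
            rintro x ⟨h1, h2⟩ ⟨h3, h4⟩
            omega
  · intro i j hij
    have adjuv : G.Adj u v := by rw [huv]; exact hcyc u
    have adju1 : G.Adj u (u - 1) := by
      have h := hcyc (u - 1); rwa [sub_add_cancel, SimpleGraph.adj_comm] at h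
    have adjv1 : G.Adj v (v + 1) := hcyc v
    have adju'1 : G.Adj u' (u' + 1) := hcyc u'
    fin_cases i <;> fin_cases j
    · exact absurd rfl hij
    · exact ⟨u, by exact ⟨by omega, by omega⟩, v, by exact ⟨by omega, by omega⟩, adjuv⟩
    · exact ⟨u, by exact ⟨by omega, by omega⟩, u', by exact ⟨by omega, by omega⟩, huu'⟩
    · exact ⟨u, by exact ⟨by omega, by omega⟩, u - 1, by exact ⟨by omega, by omega⟩, adju1⟩
    · exact ⟨v, by exact ⟨by omega, by omega⟩, u, by exact ⟨by omega, by omega⟩, adjuv.symm⟩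
    · exact absurd rfl hij
    · exact ⟨v, by exact ⟨by omega, by omega⟩, v + 1, by exact ⟨by omega, by omega⟩, adjv1⟩
    · exact ⟨v, by exact ⟨by omega, by omega⟩, v', by exact ⟨by omega, by omega⟩, hvv'⟩
    · exact ⟨u', by exact ⟨by omega, by omega⟩, u, by exact ⟨by omega, by omega⟩, huu'.symm⟩
    · exact ⟨v + 1, by exact ⟨by omega, by omega⟩, v, by exact ⟨by omega, by omega⟩, adjv1.symm⟩
    · exact absurd rfl hij
    · exact ⟨u', by exact ⟨by omega, by omega⟩, u' + 1, by exact ⟨by omega, by omega⟩, adju'1⟩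
    · exact ⟨u - 1, by exact ⟨by omega, by omega⟩, u, by exact ⟨by omega, by omega⟩, adju1.symm⟩
    · exact ⟨v', by exact ⟨by omega, by omega⟩, v, by exact ⟨by omega, by omega⟩, hvv'.symm⟩
    · exact ⟨u' + 1, by exact ⟨by omega, by omega⟩, u', by exact ⟨by omega, by omega⟩, adju'1.symm⟩
    · exact absurd rfl hij
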